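/- Let g be a probability density on [0,∞), τ > 0, and γ : [0,∞) → [0,1] measurable. If ∫₀^∞ g(x)γ(x) dx ≥ ∫₀^τ g(x) dx and ∫₀^∞ x g(x) γ(x) dx ≤ ∫₀^τ x g(x) dx, and g(x) > 0 for almost every x, then γ(x) = 1{x ≤ τ} for almost every x. -/

import Mathlib

open MeasureTheory Set

theorem stmt2 (g γ : ℝ → ℝ) (τ : ℝ) (hτ : 0 < τ)
    (hg : ∀ x, 0 ≤ g x)
    (hgint : IntegrableOn g (Ici 0))
    (hgdens : ∫ x in Ici (0:ℝ), g x = 1)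
    (hgpos : ∀ᵐ x ∂(volume.restrict (Ici (0:ℝ))), 0 < g x)
    (hγm : Measurable γ) (hγ : ∀ x, γ x ∈ Icc (0:ℝ) 1)
    (hint1 : IntegrableOn (fun x => g x * γ x) (Ici 0))
    (hint2 : IntegrableOn (fun x => x * g x * γ x) (Ici 0))
    (hint3 : IntegrableOn (fun x => x * g x) (Ici 0))
    (hcon1 : (∫ x in Ici (0:ℝ), g x * γ x) ≥ ∫ x in Icc (0:ℝ) τ, g x)
    (hcon2 : (∫ x in Ici (0:ℝ), x * g x * γ x) ≤ ∫ x in Icc (0:ℝ) τ, x * g x) :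
    ∀ᵐ x ∂(volume.restrict (Ici (0:ℝ))), γ x = if x ≤ τ then 1 else 0 := by
  set μ := volume.restrict (Ici (0:ℝ)) with hμ
  set ind : ℝ → ℝ := fun x => if x ≤ τ then 1 else 0 with hind
  set h : ℝ → ℝ := fun x => (τ - x) * g x * (γ x - ind x) with hh
  -- h = (τ - x) * g x * γ x  - indicator (Iic τ) ((τ - x) * g x)
  have hind_eq : ∀ x, (τ - x) * g x * ind x = (Iic τ).indicator (fun x => (τ - x) * g x) x := by
    intro x
    simp only [hind, indicator, mem_Iic]
    split <;> ring
  have hindint : IntegrableOn ((Iic τ).indicator (fun x => (τ - x) * g x)) (Ici 0) := by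
    apply Integrable.indicator _ measurableSet_Iic
    have : (fun x : ℝ => (τ - x) * g x) = fun x => τ * g x - x * g x := by
      funext x; ring
    rw [this]
    exact ((hgint.const_mul τ).sub hint3)
  have h1int : IntegrableOn (fun x => (τ - x) * g x * γ x) (Ici 0) := by
    have : (fun x : ℝ => (τ - x) * g x * γ x) = fun x => τ * (g x * γ x) - x * g x * γ x := by
      funext x; ring
    rw [this]
    exact (hint1.const_mul τ).sub hint2
  have hhint : Integrable h μ := by
    have : h = fun x => (τ - x) * g x * γ x - (Iic τ).indicator (fun x => (τ - x) * g x) x := by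
      funext x; rw [← hind_eq x]; simp [hh]; ring
    rw [this]
    exact h1int.sub hindint
  -- compute integral of h
  have hI1 : ∫ x, (τ - x) * g x * γ x ∂μ
      = τ * (∫ x in Ici (0:ℝ), g x * γ x) - ∫ x in Ici (0:ℝ), x * g x * γ x := by
    have : (fun x : ℝ => (τ - x) * g x * γ x) = fun x => τ * (g x * γ x) - x * g x * γ x := by
      funext x; ring
    rw [hμ, this, integral_sub ((hint1.const_mul τ)) hint2, integral_const_mul]
  have hI2 : ∫ x, (Iic τ).indicator (fun x => (τ - x) * g x) x ∂μ
      = τ * (∫ x in Icc (0:ℝ) τ, g x) - ∫ x in Icc (0:ℝ) τ, x * g x := by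
    rw [hμ, setIntegral_indicator measurableSet_Iic]
    have hs : Ici (0:ℝ) ∩ Iic τ = Icc 0 τ := Ici_inter_Iic
    rw [hs]
    have hgIcc : IntegrableOn g (Icc 0 τ) := hgint.mono_set Icc_subset_Ici_self
    have hxgIcc : IntegrableOn (fun x => x * g x) (Icc 0 τ) := hint3.mono_set Icc_subset_Ici_self
    have : (fun x : ℝ => (τ - x) * g x) = fun x => τ * g x - x * g x := by
      funext x; ring
    rw [this, integral_sub (hgIcc.const_mul τ) hxgIcc, integral_const_mul]
  have hInt_nonneg : 0 ≤ ∫ x, h x ∂μ := by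
    have : h = fun x => (τ - x) * g x * γ x - (Iic τ).indicator (fun x => (τ - x) * g x) x := by
      funext x; rw [← hind_eq x]; simp [hh]; ring
    rw [this, integral_sub h1int hindint, hI1, hI2]
    have h1 := hcon1
    have h2 := hcon2
    nlinarith [hτ.le]
  -- h ≤ 0 pointwise
  have hle : ∀ x, h x ≤ 0 := by
    intro x
    have hγx := hγ x
    simp only [mem_Icc] at hγx
    simp only [hh, hind]
    by_cases hx : x ≤ τ
    · simp only [hx, if_pos]
      have h1 : γ x - 1 ≤ 0 := by linarith [hγx.2]
      exact mul_nonpos_of_nonneg_of_nonpos (mul_nonneg (sub_nonneg.mpr hx) (hg x)) h1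
    · simp only [hx, if_neg, not_false_iff]
      have hxτ : τ - x < 0 := by push_neg at hx; linarith
      have : (τ - x) * g x ≤ 0 := mul_nonpos_of_nonpos_of_nonneg hxτ.le (hg x)
      exact mul_nonpos_of_nonpos_of_nonneg this (by linarith [hγx.1])
  -- so h = 0 a.e.
  have hzero : ∀ᵐ x ∂μ, h x = 0 := by
    have hneg : 0 ≤ᵐ[μ] fun x => -h x := Filter.Eventually.of_forall fun x => by
      simpa using hle x
    have hni : Integrable (fun x => -h x) μ := hhint.neg
    have : ∫ x, -h x ∂μ = 0 := by
      have h1 : ∫ x, -h x ∂μ ≤ 0 := by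
        rw [integral_neg]; linarith
      have h2 : 0 ≤ ∫ x, -h x ∂μ := integral_nonneg_of_ae hneg
      linarith
    have := (integral_eq_zero_iff_of_nonneg_ae hneg hni).mp this
    filter_upwards [this] with x hx
    have : -h x = 0 := hx
    linarith
  have hne : ∀ᵐ x ∂μ, x ≠ τ := by
    rw [ae_iff]
    have : {x : ℝ | ¬ x ≠ τ} = {τ} := by ext x; simp
    rw [this]
    exact le_antisymm (le_trans (Measure.restrict_le_self _) (by simp)) zero_le
  filter_upwards [hzero, hgpos, hne] with x hx hgx hxτ
  have hτx : τ - x ≠ 0 := sub_ne_zero.mpr (Ne.symm hxτ)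
  simp only [hh] at hx
  have := mul_eq_zero.mp hx
  rcases this with h' | h'
  · rcases mul_eq_zero.mp h' with h'' | h''
    · exact absurd h'' hτx
    · exact absurd h'' (ne_of_gt hgx)
  · have : γ x = ind x := by linarith [sub_eq_zero.mp h']
    simpa [hind] using this
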